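/- Let L ∈ Σ[∂] be monic of order n with constants C of characteristic zero. Then Z(L) is a free C[L]-module of rank d = |O|, with a basis {G_0 = 1, G_1, ..., G_{d−1}} consisting of operators that are order-minimal in Z(L) and whose order classes modulo n exhaust the group of orders O. Consequently Z(L) = C[L, G_1, ..., G_{d−1}]. -/

import Mathlib

open scoped Classical
noncomputable section

variable {R : Type} [Ring R]

/-- Left multiplication by `a` as an additive endomorphism of `R`. -/
def mulOp (a : R) : AddMonoid.End R := AddMonoidHom.mulLeft a

/-- The derivation as an additive endomorphism. -/
def derOp (d : R →+ R) : AddMonoid.End R := d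

/-- `d` satisfies the Leibniz rule. -/
def IsDeriv (d : R →+ R) : Prop := ∀ a b : R, d (a * b) = d a * b + a * d b

/-- Additive group of differential operators of order at most `n`:
sums of terms `a · ∂^i` with `i ≤ n`. -/
def OpLE (d : R →+ R) (n : ℕ) : AddSubgroup (AddMonoid.End R) :=
  AddSubgroup.closure {P | ∃ (a : R) (i : ℕ), i ≤ n ∧ P = mulOp a * derOp d ^ i}

/-- `L` is a differential operator. -/
def IsOp (d : R →+ R) (L : AddMonoid.End R) : Prop := ∃ n, L ∈ OpLE d n

/-- `L` is a differential operator of exact order `n`. -/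
def HasOrd (d : R →+ R) (L : AddMonoid.End R) (n : ℕ) : Prop :=
  L ∈ OpLE d n ∧ ∀ k, L ∈ OpLE d k → n ≤ k

/-- `L` is a monic differential operator of order `n`. -/
def MonicOrd (d : R →+ R) (L : AddMonoid.End R) (n : ℕ) : Prop :=
  HasOrd d L n ∧ L - derOp d ^ n ∈ OpLE d (n - 1)

/-- The centralizer of `L` in the ring of differential operators. -/
def Cent (d : R →+ R) (L : AddMonoid.End R) : Set (AddMonoid.End R) :=
  {A | IsOp d A ∧ L * A = A * L}

/-- Polynomials in `L` with constant coefficients. -/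
def CPoly (d : R →+ R) (L : AddMonoid.End R) : Set (AddMonoid.End R) :=
  {P | ∃ p : Polynomial R, (∀ k, d (p.coeff k) = 0) ∧
      P = ∑ i ∈ Finset.range (p.natDegree + 1), mulOp (p.coeff i) * L ^ i}

/-- The level of `L`: smallest order of an element of `Z(L) \ C[L]`. -/
def Level (d : R →+ R) (L : AddMonoid.End R) (M : ℕ) : Prop :=
  (∃ Q ∈ Cent d L, Q ∉ CPoly d L ∧ HasOrd d Q M) ∧
  ∀ Q ∈ Cent d L, Q ∉ CPoly d L → ∀ q, HasOrd d Q q → M ≤ q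

open Polynomial

section Infra
variable {F : Type} [Field F]

lemma mulOp_zero : mulOp (0 : F) = 0 := by
  refine AddMonoidHom.ext fun x => ?_; simp [mulOp]; rfl

lemma mulOp_add (a b : F) : mulOp (a + b) = mulOp a + mulOp b := by
  refine AddMonoidHom.ext fun x => ?_
  show (a + b) * x = a * x + b * x
  ring

lemma mulOp_mul (a b : F) : mulOp (a * b) = mulOp a * mulOp b := by
  refine AddMonoidHom.ext fun x => ?_
  show (a * b) * x = a * (b * x)
  ring

lemma mulOp_one : mulOp (1 : F) = 1 := by
  refine AddMonoidHom.ext fun x => ?_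
  show 1 * x = x
  ring

lemma mulOp_apply (a x : F) : mulOp a x = a * x := rfl

lemma mulOp_inj {a b : F} (h : mulOp a = mulOp b) : a = b := by
  have := congrArg (fun f : AddMonoid.End F => f 1) h
  simpa [mulOp_apply] using this

/-- The differential operator `∑ aᵢ ∂^i` attached to a coefficient polynomial. -/
def toE (d : F →+ F) (p : Polynomial F) : AddMonoid.End F :=
  p.sum fun i a => mulOp a * derOp d ^ i

variable (d : F →+ F)

lemma toE_zero : toE d 0 = 0 := by simp [toE, Polynomial.sum_zero_index]

lemma toE_monomial (i : ℕ) (a : F) : toE d (monomial i a) = mulOp a * derOp d ^ i := by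
  by_cases h : a = 0
  · simp [h, toE, mulOp_zero]
  · rw [toE, Polynomial.sum_monomial_index]
    simp [mulOp_zero]

lemma toE_add (p q : Polynomial F) : toE d (p + q) = toE d p + toE d q := by
  unfold toE
  apply Polynomial.sum_add_index
  · intro i; simp [mulOp_zero]
  · intro i a b; rw [mulOp_add, add_mul]

lemma toE_neg (p : Polynomial F) : toE d (-p) = -toE d p := by
  have := toE_add d p (-p)
  simp at this
  rw [toE_zero] at this
  linear_combination (norm := abel) -this

lemma toE_sub (p q : Polynomial F) : toE d (p - q) = toE d p - toE d q := by
  rw [sub_eq_add_neg, toE_add, toE_neg, sub_eq_add_neg]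

lemma toE_finsetSum {α : Type} (s : Finset α) (f : α → Polynomial F) :
    toE d (∑ i ∈ s, f i) = ∑ i ∈ s, toE d (f i) := by
  classical
  induction s using Finset.induction_on with
  | empty => simp [toE_zero]
  | @insert a s h ih => rw [Finset.sum_insert h, toE_add, ih, Finset.sum_insert h]
end Infra
section Dstep
variable {F : Type} [Field F]

/-- Coefficientwise application of `d`. -/
def dmap (d : F →+ F) (p : Polynomial F) : Polynomial F :=
  ⟨⟨Finsupp.mapRange d d.map_zero p.toFinsupp.coeff⟩⟩

variable (d : F →+ F)

@[simp] lemma coeff_dmap (p : Polynomial F) (k : ℕ) : (dmap d p).coeff k = d (p.coeff k) := rfl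

lemma dmap_add (p q : Polynomial F) : dmap d (p + q) = dmap d p + dmap d q := by
  apply Polynomial.ext; intro k; simp

/-- One step of moving `∂` across a coefficient polynomial. -/
def Dstep (p : Polynomial F) : Polynomial F := X * p + dmap d p

lemma Dstep_add (p q : Polynomial F) : Dstep d (p + q) = Dstep d p + Dstep d q := by
  unfold Dstep; rw [dmap_add, mul_add]; ring

lemma coeff_Dstep_succ (p : Polynomial F) (k : ℕ) :
    (Dstep d p).coeff (k + 1) = p.coeff k + d (p.coeff (k + 1)) := by
  simp [Dstep, Polynomial.coeff_X_mul]

lemma coeff_Dstep_zero (p : Polynomial F) : (Dstep d p).coeff 0 = d (p.coeff 0) := by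
  simp [Dstep, Polynomial.mul_coeff_zero]

lemma natDegree_dmap_le (p : Polynomial F) : (dmap d p).natDegree ≤ p.natDegree := by
  rw [Polynomial.natDegree_le_iff_coeff_eq_zero]
  intro N hN
  rw [coeff_dmap, Polynomial.coeff_eq_zero_of_natDegree_lt hN, map_zero]

lemma natDegree_Dstep_le (p : Polynomial F) : (Dstep d p).natDegree ≤ p.natDegree + 1 := by
  unfold Dstep
  refine le_trans (Polynomial.natDegree_add_le _ _) (max_le ?_ ?_)
  · refine le_trans Polynomial.natDegree_mul_le ?_
    have := Polynomial.natDegree_X_le (R := F)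
    omega
  · exact le_trans (natDegree_dmap_le d p) (Nat.le_succ _)

lemma natDegree_DstepIter_le (p : Polynomial F) (k : ℕ) :
    ((Dstep d)^[k] p).natDegree ≤ p.natDegree + k := by
  induction k with
  | zero => simp
  | succ k ih =>
      rw [Function.iterate_succ_apply']
      exact le_trans (natDegree_Dstep_le d _) (by omega)

/-- Top coefficient is preserved by `Dstep` iterates. -/
lemma coeff_DstepIter_top (p : Polynomial F) (m : ℕ) (hm : p.natDegree ≤ m) :
    ∀ k, ((Dstep d)^[k] p).coeff (k + m) = p.coeff m := by
  intro k
  induction k with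
  | zero => simp
  | succ k ih =>
      rw [Function.iterate_succ_apply']
      have h1 : ((Dstep d)^[k] p).coeff (k + m + 1) = 0 := by
        apply Polynomial.coeff_eq_zero_of_natDegree_lt
        exact lt_of_le_of_lt (natDegree_DstepIter_le d p k) (by omega)
      have : k + 1 + m = (k + m) + 1 := by omega
      rw [this, coeff_Dstep_succ, ih, h1, map_zero, add_zero]

/-- Second coefficient of `Dstep` iterates. -/
lemma coeff_DstepIter_second (p : Polynomial F) (m : ℕ) (hm : p.natDegree ≤ m) (hm1 : 1 ≤ m) :
    ∀ k, ((Dstep d)^[k] p).coeff (k + (m - 1)) = (k : F) * d (p.coeff m) + p.coeff (m - 1) := by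
  intro k
  induction k with
  | zero =>
      simp only [Function.iterate_zero_apply, Nat.cast_zero, zero_mul, zero_add]
  | succ k ih =>
      rw [Function.iterate_succ_apply']
      have h2 : k + 1 + (m - 1) = (k + (m - 1)) + 1 := by omega
      have h3 : k + (m - 1) + 1 = k + m := by omega
      rw [h2, coeff_Dstep_succ, ih, h3, coeff_DstepIter_top d p m hm k]
      push_cast
      ring

/-- Second coefficient for constants. -/
lemma coeff_DstepIter_const (c : F) :
    ∀ k, 1 ≤ k → ((Dstep d)^[k] (C c)).coeff (k - 1) = (k : F) * d c := by
  intro k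
  induction k with
  | zero => omega
  | succ k ih =>
      intro _
      rw [Function.iterate_succ_apply']
      rcases Nat.eq_zero_or_pos k with hk | hk
      · subst hk
        simp [coeff_Dstep_zero]
      · have h2 : k + 1 - 1 = (k - 1) + 1 := by omega
        have h3 : k - 1 + 1 = k + 0 := by omega
        rw [h2, coeff_Dstep_succ, ih hk, h3, coeff_DstepIter_top d (C c) 0 (by simp) k]
        push_cast [Polynomial.coeff_C]
        ring
end Dstep
section SMul
variable {F : Type} [Field F] (d : F →+ F)

lemma derOp_mulOp (hd : IsDeriv d) (a : F) :
    derOp d * mulOp a = mulOp (d a) + mulOp a * derOp d := by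
  refine AddMonoidHom.ext fun x => ?_
  show d (a * x) = d a * x + a * d x
  exact hd a x

lemma derOp_toE (hd : IsDeriv d) (p : Polynomial F) :
    derOp d * toE d p = toE d (Dstep d p) := by
  induction p using Polynomial.induction_on' with
  | add p q hp hq =>
      rw [toE_add, mul_add, hp, hq, Dstep_add, toE_add]
  | monomial i a =>
      rw [toE_monomial, ← mul_assoc, derOp_mulOp d hd]
      have : Dstep d (monomial i a) = monomial (i + 1) a + monomial i (d a) := by
        unfold Dstep
        have hXm : X * (monomial i a : Polynomial F) = monomial (i + 1) a := by
          rw [Polynomial.X_mul, Polynomial.monomial_mul_X]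
        have hdm : dmap d (monomial i a) = monomial i (d a) := by
          apply Polynomial.ext; intro k
          simp only [coeff_dmap, Polynomial.coeff_monomial]
          split <;> simp
        rw [hXm, hdm]
      rw [this, toE_add, toE_monomial, toE_monomial, add_mul, mul_assoc, pow_succ']
      abel

lemma derOpPow_toE (hd : IsDeriv d) (i : ℕ) (p : Polynomial F) :
    derOp d ^ i * toE d p = toE d ((Dstep d)^[i] p) := by
  induction i with
  | zero => simp
  | succ i ih =>
      rw [pow_succ', mul_assoc, ih, derOp_toE d hd]
      conv_rhs => rw [Function.iterate_succ_apply']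

lemma mulOp_toE (a : F) (p : Polynomial F) :
    mulOp a * toE d p = toE d (C a * p) := by
  induction p using Polynomial.induction_on' with
  | add p q hp hq => rw [toE_add, mul_add, hp, hq, mul_add, toE_add]
  | monomial i b =>
      rw [toE_monomial, ← mul_assoc, ← mulOp_mul, Polynomial.C_mul_monomial, toE_monomial]

/-- Skew multiplication of coefficient polynomials mirroring operator composition. -/
def sMul (p q : Polynomial F) : Polynomial F :=
  p.sum fun i a => C a * (Dstep d)^[i] q

lemma sMul_monomial (i : ℕ) (a : F) (q : Polynomial F) :
    sMul d (monomial i a) q = C a * (Dstep d)^[i] q := by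
  by_cases h : a = 0
  · simp [h, sMul]
  · rw [sMul, Polynomial.sum_monomial_index]
    simp

lemma sMul_add_left (p p' q : Polynomial F) :
    sMul d (p + p') q = sMul d p q + sMul d p' q := by
  unfold sMul
  apply Polynomial.sum_add_index
  · intro i; simp
  · intro i a b; rw [map_add, add_mul]

lemma toE_mul (hd : IsDeriv d) (p q : Polynomial F) :
    toE d p * toE d q = toE d (sMul d p q) := by
  induction p using Polynomial.induction_on' with
  | add p p' hp hp' => rw [toE_add, add_mul, hp, hp', sMul_add_left, toE_add]
  | monomial i a =>
      rw [toE_monomial, sMul_monomial, mul_assoc, derOpPow_toE d hd, mulOp_toE]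

lemma natDegree_sMul_le (p q : Polynomial F) :
    (sMul d p q).natDegree ≤ p.natDegree + q.natDegree := by
  rw [Polynomial.natDegree_le_iff_coeff_eq_zero]
  intro N hN
  rw [sMul, Polynomial.coeff_sum]
  apply Finset.sum_eq_zero
  intro i hi
  dsimp only
  have hi' : i ≤ p.natDegree := Polynomial.le_natDegree_of_mem_supp i hi
  have h0 : ((Dstep d)^[i] q).coeff N = 0 :=
    Polynomial.coeff_eq_zero_of_natDegree_lt (lt_of_le_of_lt (natDegree_DstepIter_le d q i) (by omega))
  rw [Polynomial.coeff_C_mul, h0, mul_zero]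

lemma coeff_sMul_top₁ (p q : Polynomial F) (k : ℕ) (hk : p.natDegree ≤ k) :
    (sMul d p q).coeff (k + q.natDegree) = p.coeff k * q.coeff q.natDegree := by
  rw [sMul, Polynomial.coeff_sum]
  unfold Polynomial.sum
  rw [Finset.sum_eq_single k]
  · dsimp only
    rw [Polynomial.coeff_C_mul, coeff_DstepIter_top d q q.natDegree le_rfl]
  · intro i hi hik
    have hi' : i ≤ p.natDegree := Polynomial.le_natDegree_of_mem_supp i hi
    dsimp only
    have hik' : i < k := lt_of_le_of_ne (le_trans hi' hk) hik
    have h0 : ((Dstep d)^[i] q).coeff (k + q.natDegree) = 0 :=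
      Polynomial.coeff_eq_zero_of_natDegree_lt (lt_of_le_of_lt (natDegree_DstepIter_le d q i) (by omega))
    rw [Polynomial.coeff_C_mul, h0, mul_zero]
  · intro hk'
    dsimp only
    rw [Polynomial.notMem_support_iff.mp hk']
    simp

lemma coeff_sMul_top₂ (p q : Polynomial F) (m : ℕ) (hm : q.natDegree ≤ m) :
    (sMul d p q).coeff (p.natDegree + m) = p.coeff p.natDegree * q.coeff m := by
  rw [sMul, Polynomial.coeff_sum]
  unfold Polynomial.sum
  rw [Finset.sum_eq_single p.natDegree]
  · dsimp only
    rw [Polynomial.coeff_C_mul, coeff_DstepIter_top d q m hm]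
  · intro i hi hik
    have hi' : i ≤ p.natDegree := Polynomial.le_natDegree_of_mem_supp i hi
    dsimp only
    have hik' : i < p.natDegree := lt_of_le_of_ne hi' hik
    have h0 : ((Dstep d)^[i] q).coeff (p.natDegree + m) = 0 :=
      Polynomial.coeff_eq_zero_of_natDegree_lt (lt_of_le_of_lt (natDegree_DstepIter_le d q i) (by omega))
    rw [Polynomial.coeff_C_mul, h0, mul_zero]
  · intro hk'
    dsimp only
    rw [Polynomial.notMem_support_iff.mp hk']
    simp
end SMul
section Inj
variable {F : Type} [Field F] [CharZero F] (d : F →+ F)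
set_option linter.unusedSectionVars false

lemma isDeriv_one (hd : IsDeriv d) : d 1 = 0 := by
  have := hd 1 1
  simp at this
  exact this

/-- The "bracket with `mulOp u`" operation on coefficient polynomials. -/
def Bop (u : F) (p : Polynomial F) : Polynomial F :=
  sMul d p (C u) - C u * p

lemma Bop_add (u : F) (p q : Polynomial F) :
    Bop d u (p + q) = Bop d u p + Bop d u q := by
  unfold Bop
  rw [sMul_add_left, mul_add]
  ring

lemma Bop_finsetSum (u : F) {α : Type} (s : Finset α) (f : α → Polynomial F) :
    Bop d u (∑ i ∈ s, f i) = ∑ i ∈ s, Bop d u (f i) := by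
  classical
  induction s using Finset.induction_on with
  | empty => simp [Bop, sMul]
  | @insert a s h ih => rw [Finset.sum_insert h, Bop_add, ih, Finset.sum_insert h]

lemma Bop_monomial (u : F) (i : ℕ) (a : F) :
    Bop d u (monomial i a) = C a * (Dstep d)^[i] (C u) - C u * monomial i a := by
  rw [Bop, sMul_monomial]

lemma natDegree_CmulIter_le (u : F) (i : ℕ) :
    (C (u : F)).natDegree + i = i := by simp

lemma coeff_Bop_monomial_top (u : F) (i : ℕ) (a : F) :
    (Bop d u (monomial i a)).coeff i = 0 := by
  rw [Bop_monomial, Polynomial.coeff_sub, Polynomial.coeff_C_mul, Polynomial.coeff_C_mul]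
  have h1 : ((Dstep d)^[i] (C u)).coeff i = u := by
    have := coeff_DstepIter_top d (C u) 0 (by simp) i
    simpa using this
  rw [h1, Polynomial.coeff_monomial]
  simp [mul_comm]

lemma natDegree_Bop_monomial_le (u : F) (i : ℕ) (a : F) :
    (Bop d u (monomial i a)).natDegree ≤ i - 1 := by
  rw [Polynomial.natDegree_le_iff_coeff_eq_zero]
  intro N hN
  rcases Nat.lt_or_ge i N with h | h
  · rw [Bop_monomial, Polynomial.coeff_sub, Polynomial.coeff_C_mul, Polynomial.coeff_C_mul]
    have h1 : ((Dstep d)^[i] (C u)).coeff N = 0 := by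
      apply Polynomial.coeff_eq_zero_of_natDegree_lt
      exact lt_of_le_of_lt (by simpa using natDegree_DstepIter_le d (C u) i) h
    rw [h1, Polynomial.coeff_monomial, if_neg (by omega)]
    simp
  · -- i - 1 < N ≤ i, so N = i and i ≥ 1... or i = 0, N > 0 contradiction with N ≤ i=0
    have : N = i := by omega
    subst this
    exact coeff_Bop_monomial_top d u N a

lemma coeff_Bop_monomial_second (u : F) (i : ℕ) (a : F) (hi : 1 ≤ i) :
    (Bop d u (monomial i a)).coeff (i - 1) = (i : F) * a * d u := by
  rw [Bop_monomial, Polynomial.coeff_sub, Polynomial.coeff_C_mul, Polynomial.coeff_C_mul,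
    coeff_DstepIter_const d u i hi, Polynomial.coeff_monomial, if_neg (by omega)]
  ring

lemma natDegree_Bop_le (u : F) (p : Polynomial F) (k : ℕ) (hp : p.natDegree ≤ k + 1) :
    (Bop d u p).natDegree ≤ k := by
  conv_lhs => rw [← Polynomial.sum_monomial_eq p]
  rw [Polynomial.sum, Bop_finsetSum]
  rw [Polynomial.natDegree_le_iff_coeff_eq_zero]
  intro N hN
  rw [Polynomial.finset_sum_coeff]
  apply Finset.sum_eq_zero
  intro i hi
  have hi' : i ≤ p.natDegree := Polynomial.le_natDegree_of_mem_supp i hi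
  apply Polynomial.coeff_eq_zero_of_natDegree_lt
  exact lt_of_le_of_lt (natDegree_Bop_monomial_le d u i _) (by omega)

lemma coeff_Bop_top (u : F) (p : Polynomial F) (k : ℕ) (hp : p.natDegree ≤ k + 1) :
    (Bop d u p).coeff k = ((k : F) + 1) * p.coeff (k + 1) * d u := by
  conv_lhs => rw [← Polynomial.sum_monomial_eq p]
  rw [Polynomial.sum, Bop_finsetSum, Polynomial.finset_sum_coeff]
  rw [Finset.sum_eq_single (k + 1)]
  · have h2 := coeff_Bop_monomial_second d u (k+1) (p.coeff (k+1)) (by omega)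
    rw [Nat.add_sub_cancel] at h2
    rw [h2]; push_cast; ring
  · intro i hi hik
    have hi' : i ≤ p.natDegree := Polynomial.le_natDegree_of_mem_supp i hi
    rcases Nat.eq_zero_or_pos i with h0 | h0
    · subst h0
      rcases Nat.eq_zero_or_pos k with h1 | h1
      · subst h1; exact coeff_Bop_monomial_top d u 0 _
      · apply Polynomial.coeff_eq_zero_of_natDegree_lt
        exact lt_of_le_of_lt (natDegree_Bop_monomial_le d u 0 _) (by omega)
    · apply Polynomial.coeff_eq_zero_of_natDegree_lt
      have : i < k + 1 := by omega
      exact lt_of_le_of_lt (natDegree_Bop_monomial_le d u i _) (by omega)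
  · intro hk'
    rw [Polynomial.notMem_support_iff.mp hk']
    simp [Bop, sMul]

lemma toE_eq_zero (hd : IsDeriv d) (u : F) (hu : d u ≠ 0) :
    ∀ k (p : Polynomial F), p.natDegree ≤ k → toE d p = 0 → p = 0 := by
  intro k
  induction k with
  | zero =>
      intro p hp h0
      have hpc : p = C (p.coeff 0) := Polynomial.eq_C_of_natDegree_le_zero hp
      rw [hpc] at h0 ⊢
      rw [← Polynomial.monomial_zero_left, toE_monomial] at h0
      have : mulOp (p.coeff 0) = 0 := by simpa using h0
      have := congrArg (fun f : AddMonoid.End F => f 1) this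
      simp [mulOp_apply] at this
      simp [this]
  | succ k ih =>
      intro p hp h0
      have hB : toE d (Bop d u p) = 0 := by
        rw [Bop, toE_sub, ← mulOp_toE]
        have hCu : toE d (C u) = mulOp u := by
          rw [← Polynomial.monomial_zero_left, toE_monomial]; simp
        rw [← hCu, ← toE_mul d hd, h0, zero_mul, mul_zero, sub_zero]
      have hBz : Bop d u p = 0 := ih _ (natDegree_Bop_le d u p k hp) hB
      have hco : ((k : F) + 1) * p.coeff (k + 1) * d u = 0 := by
        rw [← coeff_Bop_top d u p k hp, hBz]; simp
      have hk1 : ((k : F) + 1) ≠ 0 := by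
        have : (((k+1 : ℕ)) : F) ≠ 0 := Nat.cast_ne_zero.mpr (Nat.succ_ne_zero k)
        push_cast at this; exact this
      have hpk : p.coeff (k + 1) = 0 := by
        rcases mul_eq_zero.mp hco with h | h
        · rcases mul_eq_zero.mp h with h' | h'
          · exact absurd h' hk1
          · exact h'
        · exact absurd h hu
      have hdeg : p.natDegree ≤ k := by
        rw [Polynomial.natDegree_le_iff_coeff_eq_zero]
        intro N hN
        rcases Nat.lt_or_ge (k+1) N with h | h
        · exact Polynomial.coeff_eq_zero_of_natDegree_lt (lt_of_le_of_lt hp h)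
        · have : N = k + 1 := by omega
          rw [this]; exact hpk
      exact ih p hdeg h0

lemma toE_inj (hd : IsDeriv d) (u : F) (hu : d u ≠ 0) {p q : Polynomial F}
    (h : toE d p = toE d q) : p = q := by
  have : toE d (p - q) = 0 := by rw [toE_sub, h, sub_self]
  have := toE_eq_zero d hd u hu (p - q).natDegree (p - q) le_rfl this
  exact sub_eq_zero.mp this
end Inj
section OpChar
variable {F : Type} [Field F] [CharZero F] (d : F →+ F)
set_option linter.unusedSectionVars false

lemma toE_mem_OpLE (p : Polynomial F) (k : ℕ) (hp : p.natDegree ≤ k) :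
    toE d p ∈ OpLE d k := by
  rw [toE, Polynomial.sum]
  apply AddSubgroup.sum_mem
  intro i hi
  apply AddSubgroup.subset_closure
  exact ⟨p.coeff i, i, le_trans (Polynomial.le_natDegree_of_mem_supp i hi) hp, rfl⟩

lemma mem_OpLE_iff (P : AddMonoid.End F) (k : ℕ) :
    P ∈ OpLE d k ↔ ∃ p : Polynomial F, p.natDegree ≤ k ∧ P = toE d p := by
  constructor
  · intro h
    induction h using AddSubgroup.closure_induction with
    | mem x hx =>
        obtain ⟨a, i, hik, rfl⟩ := hx
        exact ⟨monomial i a, le_trans (Polynomial.natDegree_monomial_le a) hik,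
          (toE_monomial d i a).symm⟩
    | zero => exact ⟨0, by simp, (toE_zero d).symm⟩
    | add x y hx hy ihx ihy =>
        obtain ⟨p, hp, rfl⟩ := ihx
        obtain ⟨q, hq, rfl⟩ := ihy
        exact ⟨p + q, le_trans (Polynomial.natDegree_add_le p q) (max_le hp hq),
          (toE_add d p q).symm⟩
    | neg x hx ihx =>
        obtain ⟨p, hp, rfl⟩ := ihx
        exact ⟨-p, by simpa using hp, (toE_neg d p).symm⟩
  · rintro ⟨p, hp, rfl⟩
    exact toE_mem_OpLE d p k hp

lemma isOp_iff (P : AddMonoid.End F) : IsOp d P ↔ ∃ p : Polynomial F, P = toE d p := by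
  constructor
  · rintro ⟨k, hk⟩
    obtain ⟨p, _, rfl⟩ := (mem_OpLE_iff d P k).mp hk
    exact ⟨p, rfl⟩
  · rintro ⟨p, rfl⟩
    exact ⟨p.natDegree, toE_mem_OpLE d p _ le_rfl⟩

variable (hd : IsDeriv d) (u : F) (hu : d u ≠ 0)
include hd u hu

lemma toE_mem_OpLE_iff (p : Polynomial F) (k : ℕ) :
    toE d p ∈ OpLE d k ↔ p.natDegree ≤ k := by
  constructor
  · intro h
    obtain ⟨q, hq, hqe⟩ := (mem_OpLE_iff d _ k).mp h
    rwa [toE_inj d hd u hu hqe]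
  · exact toE_mem_OpLE d p k

lemma hasOrd_toE_iff (p : Polynomial F) (m : ℕ) :
    HasOrd d (toE d p) m ↔ m = p.natDegree := by
  constructor
  · rintro ⟨h1, h2⟩
    have hle : p.natDegree ≤ m := (toE_mem_OpLE_iff d hd u hu p m).mp h1
    have hge : m ≤ p.natDegree := h2 _ (toE_mem_OpLE d p _ le_rfl)
    omega
  · rintro rfl
    exact ⟨toE_mem_OpLE d p _ le_rfl, fun k hk => (toE_mem_OpLE_iff d hd u hu p k).mp hk⟩

end OpChar

section DerNeZero
variable {F : Type} [Field F] [CharZero F] (d : F →+ F)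
set_option linter.unusedSectionVars false

lemma exists_der_ne_zero {L : AddMonoid.End F} {n : ℕ} (hn : 1 ≤ n)
    (hL : MonicOrd d L n) : ∃ u, d u ≠ 0 := by
  by_contra h
  push_neg at h
  have hder : derOp d = 0 := AddMonoidHom.ext fun x => h x
  have hsub : OpLE d n ≤ OpLE d 0 := by
    rw [OpLE]
    apply (AddSubgroup.closure_le _).mpr
    rintro P ⟨a, i, hik, rfl⟩
    rcases Nat.eq_zero_or_pos i with h0 | h0
    · subst h0
      apply AddSubgroup.subset_closure
      exact ⟨a, 0, le_rfl, rfl⟩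
    · rw [hder, zero_pow (by omega), mul_zero]
      exact AddSubgroup.zero_mem _
  have := hL.1.2 0 (hsub hL.1.1)
  omega
end DerNeZero
section TopGen
variable {F : Type} [Field F] (d : F →+ F)

lemma coeff_sMul_topGen (p q : Polynomial F) (k m : ℕ) (hk : p.natDegree ≤ k)
    (hm : q.natDegree ≤ m) :
    (sMul d p q).coeff (k + m) = p.coeff k * q.coeff m := by
  rw [sMul, Polynomial.coeff_sum]
  unfold Polynomial.sum
  rw [Finset.sum_eq_single k]
  · dsimp only
    rw [Polynomial.coeff_C_mul, coeff_DstepIter_top d q m hm]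
  · intro i hi hik
    have hi' : i ≤ p.natDegree := Polynomial.le_natDegree_of_mem_supp i hi
    dsimp only
    have hik' : i < k := lt_of_le_of_ne (le_trans hi' hk) hik
    have h0 : ((Dstep d)^[i] q).coeff (k + m) = 0 :=
      Polynomial.coeff_eq_zero_of_natDegree_lt
        (lt_of_le_of_lt (natDegree_DstepIter_le d q i) (by omega))
    rw [Polynomial.coeff_C_mul, h0, mul_zero]
  · intro hk'
    dsimp only
    rw [Polynomial.notMem_support_iff.mp hk']
    simp
end TopGen

section Ops
variable {F : Type} [Field F] [CharZero F] (d : F →+ F)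
set_option linter.unusedSectionVars false

lemma toE_one : toE d 1 = 1 := by
  have : (1 : Polynomial F) = monomial 0 1 := by simp
  rw [this, toE_monomial, mulOp_one, pow_zero, one_mul]

lemma toE_C (a : F) : toE d (C a) = mulOp a := by
  rw [← Polynomial.monomial_zero_left, toE_monomial, pow_zero, mul_one]

lemma toE_Xpow (i : ℕ) : toE d (X ^ i) = derOp d ^ i := by
  rw [Polynomial.X_pow_eq_monomial, toE_monomial, mulOp_one, one_mul]

lemma toE_mul_der (p : Polynomial F) : toE d p * derOp d = toE d (p * X) := by
  induction p using Polynomial.induction_on' with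
  | add p q hp hq => rw [toE_add, add_mul, hp, hq, add_mul, toE_add]
  | monomial i a =>
      rw [toE_monomial, Polynomial.monomial_mul_X, toE_monomial, mul_assoc, pow_succ]

lemma toE_mul_derPow (p : Polynomial F) (j : ℕ) :
    toE d p * derOp d ^ j = toE d (p * X ^ j) := by
  induction j with
  | zero => simp
  | succ j ih =>
      rw [pow_succ, ← mul_assoc, ih, toE_mul_der, mul_assoc, ← pow_succ]

/-- constants commute with everything -/
lemma mulOp_const_comm (c : F) (hc : d c = 0) (hd : IsDeriv d) (p : Polynomial F) :
    mulOp c * toE d p = toE d p * mulOp c := by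
  induction p using Polynomial.induction_on' with
  | add p q hp hq => rw [toE_add, mul_add, add_mul, hp, hq]
  | monomial i a =>
      rw [toE_monomial]
      have hcd : mulOp c * derOp d = derOp d * mulOp c := by
        rw [derOp_mulOp d hd, hc, mulOp_zero, zero_add]
      have hcdi : mulOp c * derOp d ^ i = derOp d ^ i * mulOp c := by
        induction i with
        | zero => simp
        | succ i ih => rw [pow_succ, ← mul_assoc, ih, mul_assoc, hcd, ← mul_assoc]
      calc mulOp c * (mulOp a * derOp d ^ i) = (mulOp c * mulOp a) * derOp d ^ i := by
            rw [mul_assoc]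
        _ = (mulOp a * mulOp c) * derOp d ^ i := by rw [← mulOp_mul, ← mulOp_mul, mul_comm]
        _ = mulOp a * (derOp d ^ i * mulOp c) := by rw [mul_assoc, hcdi]
        _ = (mulOp a * derOp d ^ i) * mulOp c := by rw [← mul_assoc]

variable (hd : IsDeriv d) (u : F) (hu : d u ≠ 0)
include hd u hu

lemma toE_eq_zero_iff (p : Polynomial F) : toE d p = 0 ↔ p = 0 := by
  constructor
  · intro h
    exact toE_inj d hd u hu (by rw [h, toE_zero])
  · rintro rfl; exact toE_zero d

lemma sMul_add_right (p q r : Polynomial F) :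
    sMul d p (q + r) = sMul d p q + sMul d p r := by
  apply toE_inj d hd u hu
  rw [toE_add, ← toE_mul d hd, ← toE_mul d hd, ← toE_mul d hd, toE_add, mul_add]

lemma sMul_Xpow_right (p : Polynomial F) (j : ℕ) :
    sMul d p (X ^ j) = p * X ^ j := by
  apply toE_inj d hd u hu
  rw [← toE_mul d hd, toE_Xpow, toE_mul_derPow]

lemma sMul_C_left (c : F) (p : Polynomial F) : sMul d (C c) p = C c * p := by
  rw [← Polynomial.monomial_zero_left, sMul_monomial]
  simp

end Ops
section LeadConst
variable {F : Type} [Field F] [CharZero F] (d : F →+ F)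
  (hd : IsDeriv d) (u : F) (hu : d u ≠ 0)
set_option linter.unusedSectionVars false
include hd u hu

/-- Product degree/leading coefficient. -/
lemma natDegree_sMul_eq (p q : Polynomial F) (hp : p ≠ 0) (hq : q ≠ 0) :
    (sMul d p q).natDegree = p.natDegree + q.natDegree ∧
    (sMul d p q).coeff (p.natDegree + q.natDegree) = p.leadingCoeff * q.leadingCoeff ∧
    sMul d p q ≠ 0 := by
  have htop := coeff_sMul_topGen d p q p.natDegree q.natDegree le_rfl le_rfl
  have hne : p.leadingCoeff * q.leadingCoeff ≠ 0 :=
    mul_ne_zero (Polynomial.leadingCoeff_ne_zero.mpr hp) (Polynomial.leadingCoeff_ne_zero.mpr hq)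
  rw [Polynomial.leadingCoeff, Polynomial.leadingCoeff] at hne
  have hne' : (sMul d p q).coeff (p.natDegree + q.natDegree) ≠ 0 := by rw [htop]; exact hne
  have hge : p.natDegree + q.natDegree ≤ (sMul d p q).natDegree :=
    Polynomial.le_natDegree_of_ne_zero hne'
  have hle := natDegree_sMul_le d p q
  refine ⟨le_antisymm hle hge, htop, ?_⟩
  intro h
  rw [h] at hne'
  simp at hne'

/-- Existence of coefficient polynomial for powers of a monic operator. -/
lemma lpow_exists (l : Polynomial F) (n : ℕ) (hln : l.natDegree ≤ n) (hl1 : l.coeff n = 1) :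
    ∀ j : ℕ, ∃ q : Polynomial F, toE d l ^ j = toE d q ∧ q.natDegree ≤ n * j ∧
      q.coeff (n * j) = 1 := by
  intro j
  induction j with
  | zero => exact ⟨1, by rw [pow_zero, toE_one], by simp, by simp⟩
  | succ j ih =>
      obtain ⟨q, hq1, hq2, hq3⟩ := ih
      refine ⟨sMul d q l, ?_, ?_, ?_⟩
      · rw [pow_succ, hq1, toE_mul d hd]
      · refine le_trans (natDegree_sMul_le d q l) ?_
        have : n * (j + 1) = n * j + n := by ring
        omega
      · have : n * (j + 1) = n * j + n := by ring
        rw [this, coeff_sMul_topGen d q l (n*j) n hq2 hln, hq3, hl1, one_mul]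

/-- Key lemma: the leading coefficient of an operator commuting with a monic operator
is a constant. -/
lemma lead_const (l : Polynomial F) (n : ℕ) (hn : 1 ≤ n) (hln : l.natDegree ≤ n)
    (hl1 : l.coeff n = 1) (hl0 : (l - X ^ n).natDegree ≤ n - 1)
    (a : Polynomial F) (hcomm : sMul d l a = sMul d a l) :
    d (a.coeff a.natDegree) = 0 := by
  set l₀ := l - X ^ n with hl₀
  have hlsplit : l = X ^ n + l₀ := by rw [hl₀]; ring
  have hnF : (n : F) ≠ 0 := Nat.cast_ne_zero.mpr (by omega)
  rcases Nat.eq_zero_or_pos a.natDegree with hm0 | hm1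
  · -- constant case
    set c := a.coeff 0 with hc
    have ha : a = C c := Polynomial.eq_C_of_natDegree_le_zero (by omega)
    rw [hm0]
    -- coefficient at n - 1 of both sides
    have hL : (sMul d l a).coeff (n - 1) = (n : F) * d c + l₀.coeff (n-1) * c := by
      rw [hlsplit, sMul_add_left, Polynomial.coeff_add]
      have h1 : sMul d (X ^ n) a = (Dstep d)^[n] a := by
        rw [Polynomial.X_pow_eq_monomial, sMul_monomial]; simp
      have h2 : ((Dstep d)^[n] a).coeff (n - 1) = (n : F) * d c := by
        rw [ha]; exact coeff_DstepIter_const d c n hn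
      have h3 : (sMul d l₀ a).coeff (n - 1) = l₀.coeff (n-1) * c := by
        have := coeff_sMul_topGen d l₀ a (n-1) 0 hl0 (by omega)
        rw [Nat.add_zero] at this
        rw [this, ← hc]
      rw [h1, h2, h3]
    have hR : (sMul d a l).coeff (n - 1) = c * l₀.coeff (n-1) := by
      rw [ha, sMul_C_left d hd u hu, Polynomial.coeff_C_mul]
      have : l.coeff (n-1) = l₀.coeff (n-1) := by
        rw [hl₀, Polynomial.coeff_sub, Polynomial.coeff_X_pow, if_neg (by omega), sub_zero]
      rw [this]
    rw [hcomm, hR] at hL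
    have : (n : F) * d c = 0 := by linear_combination -hL
    rcases mul_eq_zero.mp this with h | h
    · exact absurd h hnF
    · exact h
  · -- case natDegree a ≥ 1
    set m := a.natDegree with hm
    have hL : (sMul d l a).coeff (n + m - 1) =
        ((n : F) * d (a.coeff m) + a.coeff (m-1)) + l₀.coeff (n-1) * a.coeff m := by
      rw [hlsplit, sMul_add_left, Polynomial.coeff_add]
      have h1 : sMul d (X ^ n) a = (Dstep d)^[n] a := by
        rw [Polynomial.X_pow_eq_monomial, sMul_monomial]; simp
      have h2 : ((Dstep d)^[n] a).coeff (n + m - 1) = (n : F) * d (a.coeff m) + a.coeff (m-1) := by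
        have := coeff_DstepIter_second d a m le_rfl hm1 n
        have hidx : n + (m - 1) = n + m - 1 := by omega
        rw [hidx] at this
        exact this
      have h3 : (sMul d l₀ a).coeff (n + m - 1) = l₀.coeff (n-1) * a.coeff m := by
        have := coeff_sMul_topGen d l₀ a (n-1) m hl0 le_rfl
        have hidx : (n - 1) + m = n + m - 1 := by omega
        rw [hidx] at this
        exact this
      rw [h1, h2, h3]
    have hR : (sMul d a l).coeff (n + m - 1) = a.coeff (m-1) + a.coeff m * l₀.coeff (n-1) := by
      rw [hlsplit, sMul_add_right d hd u hu, Polynomial.coeff_add]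
      have h1 : (sMul d a (X ^ n)).coeff (n + m - 1) = a.coeff (m-1) := by
        rw [sMul_Xpow_right d hd u hu, Polynomial.coeff_mul_X_pow', if_pos (by omega)]
        congr 1
        omega
      have h2 : (sMul d a l₀).coeff (n + m - 1) = a.coeff m * l₀.coeff (n-1) := by
        have := coeff_sMul_topGen d a l₀ m (n-1) le_rfl hl0
        have hidx : m + (n - 1) = n + m - 1 := by omega
        rw [hidx] at this
        exact this
      rw [h1, h2]
    rw [hcomm, hR] at hL
    have : (n : F) * d (a.coeff m) = 0 := by linear_combination -hL
    rcases mul_eq_zero.mp this with h | h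
    · exact absurd h hnF
    · exact h
end LeadConst
section CPolyLemmas
variable {F : Type} [Field F] [CharZero F] (d : F →+ F) (L : AddMonoid.End F)
set_option linter.unusedSectionVars false

lemma opsum_congr (f g : ℕ → F) (N : ℕ) (h : ∀ i < N, f i = g i) :
    ∑ i ∈ Finset.range N, mulOp (f i) * L ^ i = ∑ i ∈ Finset.range N, mulOp (g i) * L ^ i := by
  apply Finset.sum_congr rfl
  intro i hi
  rw [h i (Finset.mem_range.mp hi)]

lemma opsum_extend (f : ℕ → F) (N K : ℕ) (hNK : N ≤ K) (hf : ∀ i, N ≤ i → f i = 0) :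
    ∑ i ∈ Finset.range K, mulOp (f i) * L ^ i = ∑ i ∈ Finset.range N, mulOp (f i) * L ^ i := by
  symm
  apply Finset.sum_subset (Finset.range_subset_range.mpr hNK)
  intro i _ hi
  rw [hf i (by simpa using hi), mulOp_zero, zero_mul]

lemma cpoly_iff (P : AddMonoid.End F) :
    P ∈ CPoly d L ↔ ∃ (N : ℕ) (f : ℕ → F), (∀ k, d (f k) = 0) ∧
      P = ∑ i ∈ Finset.range N, mulOp (f i) * L ^ i := by
  constructor
  · rintro ⟨p, hp, rfl⟩
    exact ⟨p.natDegree + 1, p.coeff, hp, rfl⟩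
  · rintro ⟨N, f, hf, rfl⟩
    set p : Polynomial F := ∑ i ∈ Finset.range N, C (f i) * X ^ i with hp
    have hcoeff : ∀ k, p.coeff k = if k < N then f k else 0 := by
      intro k
      rw [hp, Polynomial.finset_sum_coeff]
      have : ∀ i ∈ Finset.range N, (C (f i) * X ^ i).coeff k
          = if k = i then f i else 0 := by
        intro i _
        rw [Polynomial.coeff_C_mul, Polynomial.coeff_X_pow]
        split <;> simp
      rw [Finset.sum_congr rfl this, Finset.sum_ite_eq (Finset.range N) k f]
      simp
    refine ⟨p, ?_, ?_⟩
    · intro k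
      rw [hcoeff k]
      split
      · exact hf k
      · exact map_zero d
    · have h1 : p.natDegree + 1 ≤ max N (p.natDegree + 1) := le_max_right _ _
      have h2 : N ≤ max N (p.natDegree + 1) := le_max_left _ _
      rw [← opsum_extend L p.coeff (p.natDegree + 1) (max N (p.natDegree + 1)) h1
          (fun i hi => Polynomial.coeff_eq_zero_of_natDegree_lt (by omega))]
      rw [opsum_congr L p.coeff (fun i => if i < N then f i else 0) _ (fun i _ => hcoeff i)]
      have h3 : ∀ i, N ≤ i → (if i < N then f i else 0) = 0 := by
        intro i hi; rw [if_neg (by omega)]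
      rw [opsum_extend L _ N (max N (p.natDegree + 1)) h2 h3]
      apply opsum_congr
      intro i hi
      rw [if_pos hi]

lemma cpoly_zero : (0 : AddMonoid.End F) ∈ CPoly d L := by
  rw [cpoly_iff]
  exact ⟨0, fun _ => 0, fun k => map_zero d, by simp⟩

lemma cpoly_add (P Q : AddMonoid.End F) (hP : P ∈ CPoly d L) (hQ : Q ∈ CPoly d L) :
    P + Q ∈ CPoly d L := by
  rw [cpoly_iff] at hP hQ ⊢
  obtain ⟨N, f, hf, rfl⟩ := hP
  obtain ⟨M, g, hg, rfl⟩ := hQ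
  set K := max N M with hK
  set f' : ℕ → F := fun i => if i < N then f i else 0 with hf'
  set g' : ℕ → F := fun i => if i < M then g i else 0 with hg'
  refine ⟨K, fun i => f' i + g' i, ?_, ?_⟩
  · intro k
    rw [map_add]
    have : d (f' k) = 0 := by rw [hf']; dsimp only; split; exacts [hf k, map_zero d]
    rw [this]
    have : d (g' k) = 0 := by rw [hg']; dsimp only; split; exacts [hg k, map_zero d]
    rw [this, add_zero]
  · have e1 : ∑ i ∈ Finset.range N, mulOp (f i) * L ^ i
        = ∑ i ∈ Finset.range K, mulOp (f' i) * L ^ i := by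
      rw [opsum_extend L f' N K (le_max_left _ _) (fun i hi => by rw [hf']; simp; omega)]
      apply opsum_congr
      intro i hi
      rw [hf']; simp [hi]
    have e2 : ∑ i ∈ Finset.range M, mulOp (g i) * L ^ i
        = ∑ i ∈ Finset.range K, mulOp (g' i) * L ^ i := by
      rw [opsum_extend L g' M K (le_max_right _ _) (fun i hi => by rw [hg']; simp; omega)]
      apply opsum_congr
      intro i hi
      rw [hg']; simp [hi]
    rw [e1, e2, ← Finset.sum_add_distrib]
    apply Finset.sum_congr rfl
    intro i _
    rw [mulOp_add, add_mul]

lemma cpoly_mono (c : F) (hc : d c = 0) (t : ℕ) :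
    mulOp c * L ^ t ∈ CPoly d L := by
  rw [cpoly_iff]
  refine ⟨t + 1, fun i => if i = t then c else 0, ?_, ?_⟩
  · intro k; dsimp only; split; exacts [hc, map_zero d]
  · rw [Finset.sum_eq_single t]
    · dsimp only
      rw [if_pos rfl]
    · intro i _ hit
      dsimp only
      rw [if_neg hit, mulOp_zero, zero_mul]
    · intro ht
      exact absurd (Finset.mem_range.mpr (by omega)) ht
end CPolyLemmas
section Struct
variable {F : Type} [Field F] [CharZero F] (d : F →+ F)
  (hd : IsDeriv d) (u : F) (hu : d u ≠ 0)
  (L : AddMonoid.End F) (l : Polynomial F) (n : ℕ) (hn : 1 ≤ n)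
  (hLl : L = toE d l) (hln : l.natDegree ≤ n) (hl1 : l.coeff n = 1)
set_option linter.unusedSectionVars false

include hd u hu hLl hln hl1 hn in
lemma cpoly_struct (P : AddMonoid.End F) (hP : P ∈ CPoly d L) (hP0 : P ≠ 0) :
    ∃ (p : Polynomial F) (J : ℕ), P = toE d p ∧ p ≠ 0 ∧ p.natDegree = n * J ∧
      d (p.coeff (n * J)) = 0 := by
  rw [cpoly_iff] at hP
  obtain ⟨N, f, hf, rfl⟩ := hP
  choose lp hlp1 hlp2 hlp3 using lpow_exists d hd u hu l n hln hl1
  set p : Polynomial F := ∑ i ∈ Finset.range N, C (f i) * lp i with hp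
  have hPp : ∑ i ∈ Finset.range N, mulOp (f i) * L ^ i = toE d p := by
    rw [hp, toE_finsetSum]
    apply Finset.sum_congr rfl
    intro i _
    rw [hLl, hlp1 i, mulOp_toE]
  have hS : ∃ i ∈ Finset.range N, f i ≠ 0 := by
    by_contra hall
    push_neg at hall
    apply hP0
    rw [hPp, hp]
    have : ∀ i ∈ Finset.range N, C (f i) * lp i = 0 := by
      intro i hi; rw [hall i hi, map_zero, zero_mul]
    rw [Finset.sum_congr rfl this, Finset.sum_const_zero, toE_zero]
  set S := (Finset.range N).filter (fun i => f i ≠ 0) with hSdef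
  have hSne : S.Nonempty := by
    obtain ⟨i, hi, hifne⟩ := hS
    exact ⟨i, Finset.mem_filter.mpr ⟨hi, hifne⟩⟩
  set J := S.max' hSne with hJ
  have hJS : J ∈ S := S.max'_mem hSne
  have hJN : J < N := Finset.mem_range.mp (Finset.mem_filter.mp hJS).1
  have hJf : f J ≠ 0 := (Finset.mem_filter.mp hJS).2
  have hJmax : ∀ i ∈ Finset.range N, f i ≠ 0 → i ≤ J := by
    intro i hi hif
    exact S.le_max' i (Finset.mem_filter.mpr ⟨hi, hif⟩)
  have hterm : ∀ i ∈ Finset.range N, ∀ k, n * J < k ∨ (k = n * J ∧ i ≠ J) →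
      (C (f i) * lp i).coeff k = 0 := by
    intro i hi k hk
    by_cases hif : f i = 0
    · rw [hif, map_zero, zero_mul, Polynomial.coeff_zero]
    · have hiJ : i ≤ J := hJmax i hi hif
      rw [Polynomial.coeff_C_mul]
      have : (lp i).coeff k = 0 := by
        apply Polynomial.coeff_eq_zero_of_natDegree_lt
        rcases hk with hk | ⟨rfl, hiJ'⟩
        · exact lt_of_le_of_lt (hlp2 i) (lt_of_le_of_lt (by exact Nat.mul_le_mul_left n hiJ) hk)
        · have : i < J := lt_of_le_of_ne hiJ hiJ'
          have h1 : n * i + n ≤ n * J := by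
            have h2 := Nat.mul_le_mul_left n (by omega : i + 1 ≤ J)
            calc n * i + n = n * (i + 1) := by ring
              _ ≤ n * J := h2
          exact lt_of_le_of_lt (hlp2 i) (by omega)
      rw [this, mul_zero]
  have hcoeff : p.coeff (n * J) = f J := by
    rw [hp, Polynomial.finset_sum_coeff, Finset.sum_eq_single J]
    · rw [Polynomial.coeff_C_mul, hlp3 J, mul_one]
    · intro i hi hiJ
      exact hterm i hi _ (Or.inr ⟨rfl, hiJ⟩)
    · intro h
      exact absurd (Finset.mem_range.mpr hJN) h
  have hdeg : p.natDegree ≤ n * J := by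
    rw [Polynomial.natDegree_le_iff_coeff_eq_zero]
    intro N' hN'
    rw [hp, Polynomial.finset_sum_coeff]
    apply Finset.sum_eq_zero
    intro i hi
    exact hterm i hi _ (Or.inl hN')
  have hdegeq : p.natDegree = n * J := by
    have : n * J ≤ p.natDegree := Polynomial.le_natDegree_of_ne_zero (by rw [hcoeff]; exact hJf)
    omega
  refine ⟨p, J, hPp, ?_, hdegeq, ?_⟩
  · intro h
    rw [h] at hcoeff
    simp at hcoeff
    exact hJf hcoeff.symm
  · rw [hcoeff]
    exact hf J

include hd u hu hLl in
lemma cent_repr (A : AddMonoid.End F) (hA : A ∈ Cent d L) :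
    ∃ a : Polynomial F, A = toE d a ∧ sMul d l a = sMul d a l := by
  obtain ⟨hAop, hAcomm⟩ := hA
  obtain ⟨a, rfl⟩ := (isOp_iff d A).mp hAop
  refine ⟨a, rfl, ?_⟩
  apply toE_inj d hd u hu
  rw [← toE_mul d hd, ← toE_mul d hd, ← hLl, hAcomm]

include hd u hu hLl in
lemma cent_of_repr (a : Polynomial F) (hcomm : sMul d l a = sMul d a l) :
    toE d a ∈ Cent d L := by
  refine ⟨(isOp_iff d _).mpr ⟨a, rfl⟩, ?_⟩
  rw [hLl, toE_mul d hd, toE_mul d hd, hcomm]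

lemma cent_sub (A B : AddMonoid.End F) (hA : A ∈ Cent d L) (hB : B ∈ Cent d L) :
    A - B ∈ Cent d L := by
  obtain ⟨⟨ka, hka⟩, hA2⟩ := hA
  obtain ⟨⟨kb, hkb⟩, hB2⟩ := hB
  constructor
  · refine ⟨max ka kb, ?_⟩
    have h1 : OpLE d ka ≤ OpLE d (max ka kb) := by
      rw [OpLE, OpLE]
      apply AddSubgroup.closure_mono
      rintro P ⟨a, i, hik, rfl⟩
      exact ⟨a, i, le_trans hik (le_max_left _ _), rfl⟩
    have h2 : OpLE d kb ≤ OpLE d (max ka kb) := by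
      rw [OpLE, OpLE]
      apply AddSubgroup.closure_mono
      rintro P ⟨a, i, hik, rfl⟩
      exact ⟨a, i, le_trans hik (le_max_right _ _), rfl⟩
    exact AddSubgroup.sub_mem _ (h1 hka) (h2 hkb)
  · rw [mul_sub, sub_mul, hA2, hB2]

include hd u hu in
lemma cent_mul (A B : AddMonoid.End F) (hA : A ∈ Cent d L) (hB : B ∈ Cent d L) :
    A * B ∈ Cent d L := by
  obtain ⟨hAop, hA2⟩ := hA
  obtain ⟨hBop, hB2⟩ := hB
  obtain ⟨a, rfl⟩ := (isOp_iff d A).mp hAop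
  obtain ⟨b, rfl⟩ := (isOp_iff d B).mp hBop
  constructor
  · exact (isOp_iff d _).mpr ⟨sMul d a b, (toE_mul d hd a b)⟩
  · rw [← mul_assoc, hA2, mul_assoc, hB2, mul_assoc]

include hLl in
lemma cent_L : L ∈ Cent d L := by
  constructor
  · exact ⟨l.natDegree, by rw [hLl]; exact toE_mem_OpLE d l _ le_rfl⟩
  · rfl

include hd u hu hLl in
lemma cent_one : (1 : AddMonoid.End F) ∈ Cent d L :=
  ⟨⟨0, by rw [← toE_one d]; exact toE_mem_OpLE d 1 0 (by simp)⟩, by rw [mul_one, one_mul]⟩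

include hd u hu hLl hd in
lemma cent_mulOp_const (c : F) (hc : d c = 0) (A : AddMonoid.End F) (hA : A ∈ Cent d L) :
    mulOp c * A ∈ Cent d L := by
  obtain ⟨hAop, hA2⟩ := hA
  obtain ⟨a, rfl⟩ := (isOp_iff d A).mp hAop
  constructor
  · exact (isOp_iff d _).mpr ⟨C c * a, by rw [mulOp_toE]⟩
  · have hcL : mulOp c * L = L * mulOp c := by
      rw [hLl, mulOp_const_comm d c hc hd l]
    rw [← mul_assoc, ← hcL, mul_assoc, hA2, ← mul_assoc]
end Struct
section Rep
variable {F : Type} [Field F] [CharZero F] (d : F →+ F)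
  (hd : IsDeriv d) (u : F) (hu : d u ≠ 0)
  (L : AddMonoid.End F) (l : Polynomial F) (n : ℕ) (hn : 1 ≤ n)
  (hLl : L = toE d l) (hln : l.natDegree ≤ n) (hl1 : l.coeff n = 1)
  (hl0 : (l - X ^ n).natDegree ≤ n - 1)
set_option linter.unusedSectionVars false

include hd in
lemma const_inv (c : F) (hc : d c = 0) : d c⁻¹ = 0 := by
  rcases eq_or_ne c 0 with rfl | hc0
  · simp [map_zero]
  · have h1 : d (c * c⁻¹) = 0 := by
      rw [mul_inv_cancel₀ hc0, isDeriv_one d hd]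
    rw [hd c c⁻¹, hc, zero_mul, zero_add] at h1
    exact (mul_eq_zero.mp h1).resolve_left hc0

include hd u hu hLl hln hl1 in
lemma cent_Lpow (t : ℕ) : L ^ t ∈ Cent d L := by
  induction t with
  | zero => rw [pow_zero]; exact cent_one d hd u hu L l hLl
  | succ t ih => rw [pow_succ]; exact cent_mul d hd u hu L (L^t) L ih (cent_L d L l hLl)

include hd u hu hn hLl hln hl1 hl0 in
/-- The descent: every centralizer element is a `CPoly`-combination of the `G k`. -/
lemma rep_lemma (dH : ℕ) (Gf : ℕ → AddMonoid.End F) (of : ℕ → ℕ)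
    (hG : ∀ k < dH, Gf k ∈ Cent d L ∧ Gf k ≠ 0 ∧ HasOrd d (Gf k) (of k) ∧
      (∀ Q ∈ Cent d L, Q ≠ 0 → ∀ q, HasOrd d Q q →
        (q : ZMod n) = (of k : ZMod n) → of k ≤ q))
    (hcover : ∀ Q ∈ Cent d L, Q ≠ 0 → ∀ m, HasOrd d Q m →
      ∃ k < dH, (m : ZMod n) = (of k : ZMod n)) :
    ∀ N Q, Q ∈ Cent d L → Q ∈ OpLE d N →
      ∃ c : ℕ → AddMonoid.End F, (∀ i, c i ∈ CPoly d L) ∧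
        Q = ∑ i ∈ Finset.range dH, c i * Gf i := by
  intro N
  induction N using Nat.strong_induction_on with
  | _ N IH =>
  intro Q hQc hQle
  obtain ⟨q, hqdeg, rfl⟩ := (mem_OpLE_iff d Q N).mp hQle
  rcases eq_or_ne q 0 with rfl | hq0
  · refine ⟨fun _ => 0, fun _ => cpoly_zero d L, ?_⟩
    rw [toE_zero]
    symm
    apply Finset.sum_eq_zero
    intro i _
    rw [zero_mul]
  · -- nonzero case
    have hQ0 : toE d q ≠ 0 := fun h => hq0 ((toE_eq_zero_iff d hd u hu q).mp h)
    set m := q.natDegree with hm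
    have hord : HasOrd d (toE d q) m := (hasOrd_toE_iff d hd u hu q m).mpr rfl
    obtain ⟨k, hk, hkcls⟩ := hcover _ hQc hQ0 m hord
    obtain ⟨hGc, hG0, hGord, hGmin⟩ := hG k hk
    have hokm : of k ≤ m := hGmin _ hQc hQ0 m hord hkcls
    have hdvd : n ∣ m - of k := by
      have : (m : ZMod n) = ((of k : ℕ) : ZMod n) := hkcls
      have hmod : m ≡ of k [MOD n] := (ZMod.natCast_eq_natCast_iff _ _ _).mp this
      exact (Nat.modEq_iff_dvd' hokm).mp hmod.symm
    obtain ⟨t, ht⟩ := hdvd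
    -- G k as polynomial
    obtain ⟨g, hGg, hgcomm⟩ := cent_repr d hd u hu L l hLl (Gf k) hGc
    have hg0 : g ≠ 0 := fun h => hG0 (by rw [hGg, h, toE_zero])
    have hgdeg : g.natDegree = of k := by
      have := (hasOrd_toE_iff d hd u hu g (of k)).mp (hGg ▸ hGord)
      omega
    -- leading coefficients are constants
    have hqcomm : sMul d l q = sMul d q l := by
      obtain ⟨q', hq', hc'⟩ := cent_repr d hd u hu L l hLl (toE d q) hQc
      have heq : q = q' := toE_inj d hd u hu hq'
      rw [heq]
      exact hc'
    have hdq : d (q.coeff m) = 0 := lead_const d hd u hu l n hn hln hl1 hl0 q hqcomm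
    have hdg : d (g.coeff (of k)) = 0 := by
      have := lead_const d hd u hu l n hn hln hl1 hl0 g hgcomm
      rwa [hgdeg] at this
    have hglead : g.coeff (of k) ≠ 0 := by
      rw [← hgdeg]
      exact Polynomial.leadingCoeff_ne_zero.mpr hg0
    set c0 := q.coeff m * (g.coeff (of k))⁻¹ with hc0
    have hdc0 : d c0 = 0 := by
      rw [hc0, hd _ _, hdq, zero_mul, const_inv d hd _ hdg, mul_zero, add_zero]
    -- the correction term
    obtain ⟨lt, hlt1, hlt2, hlt3⟩ := lpow_exists d hd u hu l n hln hl1 t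
    set r := C c0 * sMul d lt g with hr
    have hT : (mulOp c0 * L ^ t) * Gf k = toE d r := by
      rw [hGg, hLl, hlt1, mul_assoc, toE_mul d hd, mulOp_toE, hr]
    have hrdeg : r.natDegree ≤ m := by
      rw [hr]
      refine le_trans (Polynomial.natDegree_C_mul_le _ _) ?_
      refine le_trans (natDegree_sMul_le d lt g) ?_
      rw [hgdeg]
      omega
    have hrcoeff : r.coeff m = q.coeff m := by
      have h2 : (sMul d lt g).coeff (n * t + of k) = lt.coeff (n*t) * g.coeff (of k) :=
        coeff_sMul_topGen d lt g (n*t) (of k) hlt2 (le_of_eq hgdeg)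
      rw [hlt3, one_mul] at h2
      have hidx : n * t + of k = m := by omega
      rw [hidx] at h2
      rw [hr, Polynomial.coeff_C_mul, h2, hc0]
      field_simp
    -- the remainder
    set q' := q - r with hq'
    have hq'deg : q'.natDegree ≤ m := le_trans (Polynomial.natDegree_sub_le q r) (by omega)
    have hq'coeff : q'.coeff m = 0 := by
      rw [hq', Polynomial.coeff_sub, hrcoeff, sub_self]
    have hsplit : toE d q = toE d q' + (mulOp c0 * L ^ t) * Gf k := by
      rw [hT, ← toE_add, hq', sub_add_cancel]
    have hq'cent : toE d q' ∈ Cent d L := by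
      have h1 : (mulOp c0 * L ^ t) * Gf k ∈ Cent d L := by
        apply cent_mul d hd u hu L _ _ _ hGc
        apply cent_mulOp_const d hd u hu L l hLl c0 hdc0
        exact cent_Lpow d hd u hu L l n hLl hln hl1 t
      have := cent_sub d L (toE d q) _ hQc h1
      rwa [hsplit, add_sub_cancel_right] at this
    rcases eq_or_ne q' 0 with hq'0 | hq'ne
    · -- Q = T exactly
      refine ⟨fun i => if i = k then mulOp c0 * L ^ t else 0, ?_, ?_⟩
      · intro i
        dsimp only
        split
        · exact cpoly_mono d L c0 hdc0 t
        · exact cpoly_zero d L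
      · rw [hsplit, hq'0, toE_zero, zero_add]
        rw [Finset.sum_eq_single k]
        · dsimp only
          rw [if_pos rfl]
        · intro i _ hik
          dsimp only
          rw [if_neg hik, zero_mul]
        · intro hk'
          exact absurd (Finset.mem_range.mpr hk) hk'
    · -- recurse
      have hm1 : 1 ≤ m := by
        rcases Nat.eq_zero_or_pos m with h0 | h1
        · exfalso
          apply hq'ne
          have h2 : q'.natDegree ≤ 0 := by omega
          have := Polynomial.eq_C_of_natDegree_le_zero h2
          rw [this]
          rw [← h0, hq'coeff, map_zero]
        · exact h1
      have hq'le : toE d q' ∈ OpLE d (m - 1) := by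
        apply toE_mem_OpLE
        rw [Polynomial.natDegree_le_iff_coeff_eq_zero]
        intro N' hN'
        rcases Nat.lt_or_ge m N' with h | h
        · exact Polynomial.coeff_eq_zero_of_natDegree_lt (lt_of_le_of_lt hq'deg h)
        · have : N' = m := by omega
          rw [this]; exact hq'coeff
      have hmN : m - 1 < N := by
        have : m ≤ N := hqdeg
        omega
      obtain ⟨c', hc'1, hc'2⟩ := IH (m - 1) hmN (toE d q') hq'cent hq'le
      refine ⟨fun i => c' i + (if i = k then mulOp c0 * L ^ t else 0), ?_, ?_⟩
      · intro i
        dsimp only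
        apply cpoly_add
        · exact hc'1 i
        · split
          · exact cpoly_mono d L c0 hdc0 t
          · exact cpoly_zero d L
      · rw [hsplit, hc'2]
        rw [Finset.sum_congr rfl (fun i (_ : i ∈ Finset.range dH) => add_mul (c' i) _ (Gf i)),
          Finset.sum_add_distrib]
        congr 1
        rw [Finset.sum_eq_single k]
        · rw [if_pos rfl]
        · intro i _ hik
          rw [if_neg hik, zero_mul]
        · intro hk'
          exact absurd (Finset.mem_range.mpr hk) hk'

end Rep
section Indep
variable {F : Type} [Field F] [CharZero F] (d : F →+ F)
  (hd : IsDeriv d) (u : F) (hu : d u ≠ 0)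
  (L : AddMonoid.End F) (l : Polynomial F) (n : ℕ) (hn : 1 ≤ n)
  (hLl : L = toE d l) (hln : l.natDegree ≤ n) (hl1 : l.coeff n = 1)
set_option linter.unusedSectionVars false

include hd u hu hn hLl hln hl1 in
lemma indep_lemma (dH : ℕ) (Gf : ℕ → AddMonoid.End F) (of : ℕ → ℕ)
    (hG : ∀ k < dH, Gf k ∈ Cent d L ∧ Gf k ≠ 0 ∧ HasOrd d (Gf k) (of k))
    (hdist : ∀ k < dH, ∀ k' < dH, k ≠ k' → (of k : ZMod n) ≠ (of k' : ZMod n)) :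
    ∀ c : ℕ → AddMonoid.End F, (∀ i, c i ∈ CPoly d L) →
      ∑ i ∈ Finset.range dH, c i * Gf i = 0 → ∀ i < dH, c i = 0 := by
  intro c hc hzero
  by_contra hcon
  push_neg at hcon
  obtain ⟨i₀, hi₀, hci₀⟩ := hcon
  have key : ∀ i : ℕ, ∃ qi : Polynomial F,
      (i < dH → c i * Gf i = toE d qi) ∧
      ((c i = 0 ∨ ¬ i < dH) → qi = 0) ∧
      ((c i ≠ 0 ∧ i < dH) → qi ≠ 0 ∧ (qi.natDegree : ZMod n) = (of i : ZMod n)) := by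
    intro i
    by_cases hidH : i < dH
    · by_cases hci : c i = 0
      · refine ⟨0, ?_, fun _ => rfl, ?_⟩
        · intro _
          rw [hci, zero_mul, toE_zero]
        · rintro ⟨h, _⟩
          exact absurd hci h
      · obtain ⟨hGcent, hGne, hGord⟩ := hG i hidH
        obtain ⟨pi, Ji, hpi1, hpi2, hpi3, hpi4⟩ :=
          cpoly_struct d hd u hu L l n hn hLl hln hl1 (c i) (hc i) hci
        obtain ⟨gi, hgi1, hgi2⟩ := cent_repr d hd u hu L l hLl (Gf i) hGcent
        have hgine : gi ≠ 0 := fun h => hGne (by rw [hgi1, h, toE_zero])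
        have hgideg : gi.natDegree = of i := by
          have := (hasOrd_toE_iff d hd u hu gi (of i)).mp (hgi1 ▸ hGord)
          omega
        refine ⟨sMul d pi gi, ?_, ?_, ?_⟩
        · intro _
          rw [hpi1, hgi1, toE_mul d hd]
        · rintro (h | h)
          · exact absurd h hci
          · exact absurd hidH h
        · intro _
          obtain ⟨hdeq, hlead, hne⟩ := natDegree_sMul_eq d hd u hu pi gi hpi2 hgine
          refine ⟨hne, ?_⟩
          rw [hdeq, hpi3, hgideg]
          push_cast
          simp [ZMod.natCast_self]
    · exact ⟨0, fun h => absurd h hidH, fun _ => rfl,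
        fun ⟨_, h⟩ => absurd h hidH⟩
  choose qf hq1 hq2 hq3 using key
  have hsum : ∑ i ∈ Finset.range dH, qf i = 0 := by
    apply toE_inj d hd u hu
    rw [toE_finsetSum, toE_zero]
    rw [← hzero]
    apply Finset.sum_congr rfl
    intro i hi
    exact (hq1 i (Finset.mem_range.mp hi)).symm
  set T := (Finset.range dH).filter (fun i => c i ≠ 0) with hT
  have hTne : T.Nonempty := ⟨i₀, Finset.mem_filter.mpr ⟨Finset.mem_range.mpr hi₀, hci₀⟩⟩
  obtain ⟨istar, histar, hmax⟩ := Finset.exists_max_image T (fun i => (qf i).natDegree) hTne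
  have histar' : istar < dH := Finset.mem_range.mp (Finset.mem_filter.mp histar).1
  have hcistar : c istar ≠ 0 := (Finset.mem_filter.mp histar).2
  obtain ⟨hqstar_ne, hqstar_cls⟩ := hq3 istar ⟨hcistar, histar'⟩
  set M := (qf istar).natDegree with hM
  have hcoeffsum : (∑ i ∈ Finset.range dH, qf i).coeff M = 0 := by
    rw [hsum, Polynomial.coeff_zero]
  rw [Polynomial.finset_sum_coeff] at hcoeffsum
  have hsingle : ∀ i ∈ Finset.range dH, i ≠ istar → (qf i).coeff M = 0 := by
    intro i hi hine
    have hidH : i < dH := Finset.mem_range.mp hi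
    by_cases hci : c i = 0
    · rw [hq2 i (Or.inl hci), Polynomial.coeff_zero]
    · obtain ⟨hqine, hqicls⟩ := hq3 i ⟨hci, hidH⟩
      have hile : (qf i).natDegree ≤ M := hmax i (Finset.mem_filter.mpr ⟨hi, hci⟩)
      have hneq : (qf i).natDegree ≠ M := by
        intro h
        apply hdist i hidH istar histar' hine
        rw [← hqicls, ← hqstar_cls, h]
      exact Polynomial.coeff_eq_zero_of_natDegree_lt (by omega)
  rw [Finset.sum_eq_single istar] at hcoeffsum
  · exact hqstar_ne (Polynomial.leadingCoeff_eq_zero.mp hcoeffsum)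
  · exact fun i hi hine => hsingle i hi hine
  · intro h
    exact absurd (Finset.mem_range.mpr histar') h
end Indep

/-- **Goodearl's theorem.** `Z(L)` is a free `C[L]`-module of rank
`d = |O|`, with a basis `G_0 = 1, G_1, ..., G_{d−1}` of order-minimal operators whose
order classes modulo `n` exhaust the group of orders `O`. -/
theorem goodearl_basis {F : Type} [Field F] [CharZero F]
    (d : F →+ F) (hd : IsDeriv d) (L : AddMonoid.End F) (n : ℕ) (hn : 1 ≤ n)
    (hL : MonicOrd d L n) (H : AddSubgroup (ZMod n))
    (hH : (H : Set (ZMod n)) =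
      {x | ∃ Q ∈ Cent d L, Q ≠ 0 ∧ ∃ m : ℕ, HasOrd d Q m ∧ x = (m : ZMod n)}) :
    ∃ (G : ℕ → AddMonoid.End F) (o : ℕ → ℕ),
      G 0 = 1 ∧
      (∀ k < Nat.card H,
        G k ∈ Cent d L ∧ HasOrd d (G k) (o k) ∧
        (∀ Q ∈ Cent d L, Q ≠ 0 → ∀ q : ℕ, HasOrd d Q q →
          (q : ZMod n) = (o k : ZMod n) → o k ≤ q)) ∧
      ({x : ZMod n | ∃ k < Nat.card H, x = (o k : ZMod n)} = (H : Set (ZMod n))) ∧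
      (∀ Q ∈ Cent d L, ∃ c : ℕ → AddMonoid.End F,
        (∀ i, c i ∈ CPoly d L) ∧
        Q = ∑ i ∈ Finset.range (Nat.card H), c i * G i) ∧
      (∀ c : ℕ → AddMonoid.End F, (∀ i, c i ∈ CPoly d L) →
        ∑ i ∈ Finset.range (Nat.card H), c i * G i = 0 →
        ∀ i < Nat.card H, c i = 0) := by
  classical
  -- derivation is nonzero
  obtain ⟨u, hu⟩ := exists_der_ne_zero d hn hL
  -- extract the coefficient polynomial of L
  obtain ⟨l, hln, hLl⟩ := (mem_OpLE_iff d L n).mp hL.1.1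
  have hl0 : (l - X ^ n).natDegree ≤ n - 1 := by
    have h1 : L - derOp d ^ n = toE d (l - X ^ n) := by
      rw [toE_sub, toE_Xpow, hLl]
    have h2 := hL.2
    rw [h1] at h2
    exact (toE_mem_OpLE_iff d hd u hu _ _).mp h2
  have hl1 : l.coeff n = 1 := by
    have h1 : (l - X ^ n).coeff n = 0 :=
      Polynomial.coeff_eq_zero_of_natDegree_lt (lt_of_le_of_lt hl0 (by omega))
    rw [Polynomial.coeff_sub, Polynomial.coeff_X_pow, if_pos rfl] at h1
    linear_combination h1
  -- enumerate H
  haveI : NeZero n := ⟨by omega⟩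
  set dH := Nat.card H with hdHdef
  have hdH : 0 < dH := Nat.card_pos
  have e1 : ↥H ≃ Fin dH := Nat.equivFinOfCardPos (by omega)
  set zH : ↥H := 0 with hzH
  set z0 : Fin dH := ⟨0, hdH⟩ with hz0
  set E : Fin dH → ↥H := fun k => e1.symm (Equiv.swap z0 (e1 zH) k) with hE
  have hEinj : Function.Injective E := by
    intro a b hab
    have := e1.symm.injective hab
    exact (Equiv.swap z0 (e1 zH)).injective this
  have hEsurj : Function.Surjective E := by
    intro x
    refine ⟨Equiv.swap z0 (e1 zH) (e1 x), ?_⟩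
    rw [hE]
    simp
  have hE0 : E z0 = zH := by
    rw [hE]
    simp
  -- minimal-order generator for each class
  have hex : ∀ x : ↥H, ∃ m : ℕ, ∃ Q ∈ Cent d L, Q ≠ 0 ∧ HasOrd d Q m ∧
      (m : ZMod n) = (x : ZMod n) := by
    intro x
    have hx : (x : ZMod n) ∈ {x | ∃ Q ∈ Cent d L, Q ≠ 0 ∧ ∃ m : ℕ, HasOrd d Q m ∧
        x = (m : ZMod n)} := by
      rw [← hH]
      exact x.2
    obtain ⟨Q, hQ1, hQ2, m, hQ3, hQ4⟩ := hx
    exact ⟨m, Q, hQ1, hQ2, hQ3, hQ4.symm⟩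
  set ofH : ↥H → ℕ := fun x => Nat.find (hex x) with hofH
  have hofH_spec : ∀ x : ↥H, ∃ Q ∈ Cent d L, Q ≠ 0 ∧ HasOrd d Q (ofH x) ∧
      ((ofH x : ℕ) : ZMod n) = (x : ZMod n) := fun x => Nat.find_spec (hex x)
  have hofH_min : ∀ x : ↥H, ∀ q : ℕ, (∃ Q ∈ Cent d L, Q ≠ 0 ∧ HasOrd d Q q ∧
      (q : ZMod n) = (x : ZMod n)) → ofH x ≤ q := fun x q hq => Nat.find_min' (hex x) hq
  set GH : ↥H → AddMonoid.End F := fun x => Classical.choose (hofH_spec x) with hGH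
  -- the basis
  set G : ℕ → AddMonoid.End F := fun k =>
    if h : k < dH then (if k = 0 then 1 else GH (E ⟨k, h⟩)) else 1 with hGdef
  set o : ℕ → ℕ := fun k =>
    if h : k < dH then (if k = 0 then 0 else ofH (E ⟨k, h⟩)) else 0 with hodef
  have hone_ne : (1 : AddMonoid.End F) ≠ 0 := by
    intro h
    have := congrArg (fun f : AddMonoid.End F => f 1) h
    simp at this
  have hone_ord : HasOrd d (1 : AddMonoid.End F) 0 := by
    have : (1 : AddMonoid.End F) = toE d 1 := (toE_one d).symm
    rw [this]
    exact (hasOrd_toE_iff d hd u hu 1 0).mpr (by simp)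
  -- key properties
  have hGprop : ∀ k, ∀ h : k < dH, G k ∈ Cent d L ∧ G k ≠ 0 ∧ HasOrd d (G k) (o k) ∧
      ((o k : ℕ) : ZMod n) = ((E ⟨k, h⟩ : ↥H) : ZMod n) ∧
      (∀ Q ∈ Cent d L, Q ≠ 0 → ∀ q : ℕ, HasOrd d Q q →
        (q : ZMod n) = (o k : ZMod n) → o k ≤ q) := by
    intro k h
    by_cases hk0 : k = 0
    · subst hk0
      have hGk : G 0 = 1 := by rw [hGdef]; simp [h]
      have hok : o 0 = 0 := by rw [hodef]; simp [h]
      rw [hGk, hok]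
      have hz0eq : (⟨0, hdH⟩ : Fin dH) = z0 := rfl
      refine ⟨cent_one d hd u hu L l hLl, hone_ne, hone_ord, ?_, ?_⟩
      · rw [hz0eq, hE0, hzH]
        simp
      · intro Q _ _ q _ _
        omega
    · have hGk : G k = GH (E ⟨k, h⟩) := by rw [hGdef]; simp [h, hk0]
      have hok : o k = ofH (E ⟨k, h⟩) := by rw [hodef]; simp [h, hk0]
      set x := E ⟨k, h⟩ with hx
      obtain ⟨hc1, hc2, hc3, hc4⟩ := Classical.choose_spec (hofH_spec x)
      rw [hGk, hok]
      refine ⟨hc1, hc2, hc3, hc4, ?_⟩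
      intro Q hQ1 hQ2 q hQ3 hQ4
      apply hofH_min x q
      exact ⟨Q, hQ1, hQ2, hQ3, by rw [hQ4, hc4]⟩
  -- coverage
  have hcover : ∀ Q ∈ Cent d L, Q ≠ 0 → ∀ m, HasOrd d Q m →
      ∃ k < dH, (m : ZMod n) = (o k : ZMod n) := by
    intro Q hQ1 hQ2 m hQ3
    have hmH : (m : ZMod n) ∈ H := by
      have : (m : ZMod n) ∈ (H : Set (ZMod n)) := by
        rw [hH]
        exact ⟨Q, hQ1, hQ2, m, hQ3, rfl⟩
      exact this
    obtain ⟨k, hk⟩ := hEsurj ⟨(m : ZMod n), hmH⟩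
    refine ⟨k.1, k.2, ?_⟩
    have := (hGprop k.1 k.2).2.2.2.1
    rw [this]
    have : (⟨k.1, k.2⟩ : Fin dH) = k := rfl
    rw [this, hk]
  -- distinctness
  have hdist : ∀ k < dH, ∀ k' < dH, k ≠ k' → (o k : ZMod n) ≠ (o k' : ZMod n) := by
    intro k hk k' hk' hne
    have h1 := (hGprop k hk).2.2.2.1
    have h2 := (hGprop k' hk').2.2.2.1
    rw [h1, h2]
    intro hcontra
    apply hne
    have : E ⟨k, hk⟩ = E ⟨k', hk'⟩ := Subtype.ext hcontra
    have := hEinj this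
    simpa using congrArg Fin.val this
  refine ⟨G, o, ?_, ?_, ?_, ?_, ?_⟩
  · rw [hGdef]; simp [hdH]
  · intro k hk
    obtain ⟨h1, _, h3, _, h5⟩ := hGprop k hk
    exact ⟨h1, h3, h5⟩
  · ext x
    constructor
    · rintro ⟨k, hk, rfl⟩
      have := (hGprop k hk).2.2.2.1
      rw [this]
      exact (E ⟨k, hk⟩).2
    · intro hx
      obtain ⟨k, hk⟩ := hEsurj ⟨x, hx⟩
      refine ⟨k.1, k.2, ?_⟩
      have := (hGprop k.1 k.2).2.2.2.1
      rw [this]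
      have hke : (⟨k.1, k.2⟩ : Fin dH) = k := rfl
      rw [hke, hk]
  · intro Q hQ
    obtain ⟨N, hN⟩ := hQ.1
    exact rep_lemma d hd u hu L l n hn hLl hln hl1 hl0 dH G o
      (fun k hk => ⟨(hGprop k hk).1, (hGprop k hk).2.1, (hGprop k hk).2.2.1,
        (hGprop k hk).2.2.2.2⟩) hcover N Q hQ hN
  · exact indep_lemma d hd u hu L l n hn hLl hln hl1 dH G o
      (fun k hk => ⟨(hGprop k hk).1, (hGprop k hk).2.1, (hGprop k hk).2.2.1⟩) hdist
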